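/- Let ρ > 0 and let ψ : ℝ → ℝ be measurable with ∫_ℝ ψ(y)^2 dy ≤ 1. Then ∫_0^∞ e^{2ρx} · ( ∫_x^∞ |ψ(y)| · e^{−ρy} dy )^2 dx ≤ 1/ρ^2, with all integrals taken with respect to Lebesgue measure. -/

import Mathlib

open Real MeasureTheory ENNReal Set Filter

lemma exp_int_Ioi (ρ : ℝ) (hρ : 0 < ρ) (a : ℝ) :
    ∫ y in Set.Ioi a, Real.exp (-ρ * y) = Real.exp (-ρ * a) / ρ := by
  have H : ∀ x ∈ Set.Ici a, HasDerivAt (fun y => -Real.exp (-ρ * y) / ρ)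
      (Real.exp (-ρ * x)) x := by
    intro x _
    have := (((hasDerivAt_id x).const_mul (-ρ)).exp).neg.div_const ρ
    convert this using 1
    · rfl
    · rfl
    · funext y; simp [neg_div]
    · simp only [id]
      field_simp
  have hint : IntegrableOn (fun y => Real.exp (-ρ * y)) (Set.Ioi a) :=
    exp_neg_integrableOn_Ioi a hρ
  have htend : Filter.Tendsto (fun y => -Real.exp (-ρ * y) / ρ) Filter.atTop (nhds 0) := by
    have : Filter.Tendsto (fun y => -Real.exp (-ρ * y) / ρ) Filter.atTop (nhds (-0 / ρ)) := by
      refine Filter.Tendsto.div_const (Filter.Tendsto.neg ?_) _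
      exact tendsto_exp_atBot.comp (tendsto_id.const_mul_atTop_of_neg (neg_neg_iff_pos.2 hρ))
    simpa using this
  have := MeasureTheory.integral_Ioi_of_hasDerivAt_of_tendsto' H hint htend
  rw [this]; ring

lemma lint_exp_Ioi (ρ : ℝ) (hρ : 0 < ρ) (a : ℝ) :
    ∫⁻ y in Set.Ioi a, ENNReal.ofReal (Real.exp (-ρ * y)) = ENNReal.ofReal (Real.exp (-ρ * a) / ρ) := by
  rw [← MeasureTheory.ofReal_integral_eq_lintegral_ofReal (exp_neg_integrableOn_Ioi a hρ)
    (ae_of_all _ fun y => (Real.exp_pos _).le), exp_int_Ioi ρ hρ a]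

lemma lint_exp_Ioo (ρ : ℝ) (hρ : 0 < ρ) (y : ℝ) :
    ∫⁻ x in Set.Ioo 0 y, ENNReal.ofReal (Real.exp (ρ * x) / ρ) ≤
      ENNReal.ofReal (Real.exp (ρ * y) / ρ ^ 2) := by
  rcases le_or_gt y 0 with hy | hy
  · rw [Set.Ioo_eq_empty (by linarith)]
    simp
  · have hcont : Continuous (fun x : ℝ => Real.exp (ρ * x) / ρ) := by continuity
    have hint : IntegrableOn (fun x : ℝ => Real.exp (ρ * x) / ρ) (Set.Ioo 0 y) :=
      (hcont.integrableOn_Icc).mono_set Set.Ioo_subset_Icc_self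
    rw [← MeasureTheory.ofReal_integral_eq_lintegral_ofReal hint
      (ae_of_all _ fun x => by positivity)]
    refine ENNReal.ofReal_le_ofReal ?_
    have h1 : ∫ x in Set.Ioo 0 y, Real.exp (ρ * x) / ρ = (Real.exp (ρ * y) - 1) / ρ ^ 2 := by
      rw [← MeasureTheory.integral_Ioc_eq_integral_Ioo,
        ← intervalIntegral.integral_of_le hy.le]
      rw [intervalIntegral.integral_div]
      rw [intervalIntegral.integral_comp_mul_left (fun x => Real.exp x) hρ.ne']
      rw [integral_exp]
      simp only [smul_eq_mul, mul_zero, Real.exp_zero]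
      rw [inv_mul_eq_div, div_div, ← sq]
    rw [h1]
    have : (0:ℝ) < ρ ^ 2 := by positivity
    gcongr
    linarith

lemma cs_step (ρ : ℝ) (hρ : 0 < ρ) (ψ : ℝ → ℝ) (hψ : Measurable ψ) (x : ℝ) :
    (∫⁻ y in Set.Ioi x, ENNReal.ofReal (|ψ y| * Real.exp (-ρ * y))) ^ 2 ≤
      (∫⁻ y in Set.Ioi x, ENNReal.ofReal (ψ y ^ 2 * Real.exp (-ρ * y))) *
        ENNReal.ofReal (Real.exp (-ρ * x) / ρ) := by
  set f : ℝ → ℝ≥0∞ := fun y => ENNReal.ofReal (|ψ y| * Real.exp (-(ρ * y) / 2)) with hf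
  set g : ℝ → ℝ≥0∞ := fun y => ENNReal.ofReal (Real.exp (-(ρ * y) / 2)) with hg
  have hfg : ∀ y, ENNReal.ofReal (|ψ y| * Real.exp (-ρ * y)) = f y * g y := by
    intro y
    rw [hf, hg, ← ENNReal.ofReal_mul (by positivity)]
    congr 1
    rw [mul_assoc, ← Real.exp_add]
    ring_nf
  have hf2 : ∀ y, f y ^ (2 : ℝ) = ENNReal.ofReal (ψ y ^ 2 * Real.exp (-ρ * y)) := by
    intro y
    rw [hf, ENNReal.rpow_two, ← ENNReal.ofReal_pow (by positivity)]
    congr 1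
    rw [mul_pow, sq_abs, ← Real.exp_nat_mul]
    congr 2
    push_cast
    ring
  have hg2 : ∀ y, g y ^ (2 : ℝ) = ENNReal.ofReal (Real.exp (-ρ * y)) := by
    intro y
    rw [hg, ENNReal.rpow_two, ← ENNReal.ofReal_pow (by positivity), ← Real.exp_nat_mul]
    congr 2
    push_cast
    ring
  have hpq : Real.HolderConjugate 2 2 := Real.holderConjugate_iff.mpr ⟨one_lt_two, by norm_num⟩
  have hmf : AEMeasurable f (volume.restrict (Set.Ioi x)) := by fun_prop
  have hmg : AEMeasurable g (volume.restrict (Set.Ioi x)) := by fun_prop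
  have hCS := ENNReal.lintegral_mul_le_Lp_mul_Lq (volume.restrict (Set.Ioi x)) hpq hmf hmg
  calc (∫⁻ y in Set.Ioi x, ENNReal.ofReal (|ψ y| * Real.exp (-ρ * y))) ^ 2
      = (∫⁻ y in Set.Ioi x, f y * g y) ^ 2 := by
        congr 1; exact lintegral_congr fun y => hfg y
    _ ≤ ((∫⁻ y in Set.Ioi x, f y ^ (2:ℝ)) ^ ((1:ℝ)/2) *
          (∫⁻ y in Set.Ioi x, g y ^ (2:ℝ)) ^ ((1:ℝ)/2)) ^ 2 := by
        gcongr
        exact hCS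
    _ = (∫⁻ y in Set.Ioi x, f y ^ (2:ℝ)) * (∫⁻ y in Set.Ioi x, g y ^ (2:ℝ)) := by
        rw [mul_pow]
        congr 1 <;>
        · rw [← ENNReal.rpow_natCast _ 2, ← ENNReal.rpow_mul]
          norm_num
    _ = (∫⁻ y in Set.Ioi x, ENNReal.ofReal (ψ y ^ 2 * Real.exp (-ρ * y))) *
          ENNReal.ofReal (Real.exp (-ρ * x) / ρ) := by
        rw [lintegral_congr hf2, lintegral_congr hg2, lint_exp_Ioi ρ hρ x]

/-- The key kernel estimate: for `ρ > 0` and `ψ` in the unit ball of `L_2(ℝ)`,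
`∫_0^∞ e^{2ρx} ( ∫_x^∞ |ψ(y)| e^{-ρy} dy )² dx ≤ 1/ρ²`. -/
theorem stmt_10 (ρ : ℝ) (hρ : 0 < ρ) (ψ : ℝ → ℝ) (hψ : Measurable ψ)
    (hψ2 : (∫⁻ y : ℝ, ENNReal.ofReal (ψ y ^ 2)) ≤ 1) :
    (∫⁻ x in Set.Ioi (0 : ℝ), ENNReal.ofReal (Real.exp (2 * ρ * x)) *
        (∫⁻ y in Set.Ioi x, ENNReal.ofReal (|ψ y| * Real.exp (-ρ * y))) ^ 2) ≤
      ENNReal.ofReal (1 / ρ ^ 2) := by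
  set k : ℝ → ℝ≥0∞ := fun y => ENNReal.ofReal (ψ y ^ 2 * Real.exp (-ρ * y)) with hkdef
  set h : ℝ → ℝ≥0∞ := fun x => ENNReal.ofReal (Real.exp (ρ * x) / ρ) with hhdef
  have hk : Measurable k := by rw [hkdef]; fun_prop
  have hh : Measurable h := by rw [hhdef]; fun_prop
  -- Step 1: Cauchy–Schwarz on the inner integral
  have step1 : (∫⁻ x in Set.Ioi (0 : ℝ), ENNReal.ofReal (Real.exp (2 * ρ * x)) *
        (∫⁻ y in Set.Ioi x, ENNReal.ofReal (|ψ y| * Real.exp (-ρ * y))) ^ 2) ≤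
      ∫⁻ x in Set.Ioi (0 : ℝ), h x * ∫⁻ y in Set.Ioi x, k y := by
    refine lintegral_mono fun x => ?_
    have e1 : Real.exp (2 * ρ * x) * (Real.exp (-ρ * x) / ρ) = Real.exp (ρ * x) / ρ := by
      rw [← mul_div_assoc, ← Real.exp_add]
      ring_nf
    calc ENNReal.ofReal (Real.exp (2 * ρ * x)) *
          (∫⁻ y in Set.Ioi x, ENNReal.ofReal (|ψ y| * Real.exp (-ρ * y))) ^ 2
        ≤ ENNReal.ofReal (Real.exp (2 * ρ * x)) *
          ((∫⁻ y in Set.Ioi x, k y) * ENNReal.ofReal (Real.exp (-ρ * x) / ρ)) :=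
          mul_le_mul_right (cs_step ρ hρ ψ hψ x) _
      _ = (ENNReal.ofReal (Real.exp (2 * ρ * x)) * ENNReal.ofReal (Real.exp (-ρ * x) / ρ)) *
          (∫⁻ y in Set.Ioi x, k y) := by ring
      _ = h x * ∫⁻ y in Set.Ioi x, k y := by
          rw [← ENNReal.ofReal_mul (Real.exp_nonneg _), e1]
  -- Step 2: Tonelli
  set S : Set (ℝ × ℝ) := {q : ℝ × ℝ | q.1 < q.2} with hS
  set G : ℝ × ℝ → ℝ≥0∞ := S.indicator (fun q => h q.1 * k q.2) with hGdef
  have hG : Measurable G :=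
    ((hh.comp measurable_fst).mul (hk.comp measurable_snd)).indicator
      (measurableSet_lt measurable_fst measurable_snd)
  have swap : (∫⁻ x in Set.Ioi (0 : ℝ), h x * ∫⁻ y in Set.Ioi x, k y) =
      ∫⁻ y, ∫⁻ x in Set.Ioi (0 : ℝ), G (x, y) := by
    have swap0 : (∫⁻ x in Set.Ioi (0 : ℝ), ∫⁻ y, G (x, y)) =
        ∫⁻ y, ∫⁻ x in Set.Ioi (0 : ℝ), G (x, y) := lintegral_lintegral_swap hG.aemeasurable
    rw [← swap0]
    refine lintegral_congr fun x => ?_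
    rw [← lintegral_indicator (measurableSet_Ioi (a := x)) k, ← lintegral_const_mul _
      ((hk.indicator measurableSet_Ioi))]
    refine lintegral_congr fun y => ?_
    by_cases hxy : x < y <;>
      simp [hGdef, hS, Set.indicator_apply, hxy]
  -- Step 3: bound the inner integral in x
  have step3 : ∀ y : ℝ, (∫⁻ x in Set.Ioi (0 : ℝ), G (x, y)) ≤
      ENNReal.ofReal (ψ y ^ 2) * ENNReal.ofReal (1 / ρ ^ 2) := by
    intro y
    have e2 : ψ y ^ 2 * Real.exp (-ρ * y) * (Real.exp (ρ * y) / ρ ^ 2) =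
        ψ y ^ 2 * (1 / ρ ^ 2) := by
      rw [neg_mul, Real.exp_neg]
      field_simp
    have hrw : (∫⁻ x in Set.Ioi (0 : ℝ), G (x, y)) = ∫⁻ x in Set.Ioo 0 y, h x * k y := by
      have hpt : ∀ x : ℝ, G (x, y) = (Set.Iio y).indicator (fun x => h x * k y) x := by
        intro x
        by_cases hxy : x < y <;> simp [hGdef, hS, Set.indicator_apply, hxy]
      rw [lintegral_congr hpt, lintegral_indicator measurableSet_Iio,
        Measure.restrict_restrict measurableSet_Iio, Set.Iio_inter_Ioi]
    rw [hrw, lintegral_mul_const _ hh]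
    calc (∫⁻ x in Set.Ioo 0 y, h x) * k y
        ≤ ENNReal.ofReal (Real.exp (ρ * y) / ρ ^ 2) * k y :=
          mul_le_mul_left (lint_exp_Ioo ρ hρ y) _
      _ = ENNReal.ofReal (ψ y ^ 2) * ENNReal.ofReal (1 / ρ ^ 2) := by
          simp only [hkdef]
          rw [mul_comm, ← ENNReal.ofReal_mul (by positivity), e2,
            ENNReal.ofReal_mul (sq_nonneg _)]
  calc (∫⁻ x in Set.Ioi (0 : ℝ), ENNReal.ofReal (Real.exp (2 * ρ * x)) *
        (∫⁻ y in Set.Ioi x, ENNReal.ofReal (|ψ y| * Real.exp (-ρ * y))) ^ 2)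
      ≤ ∫⁻ x in Set.Ioi (0 : ℝ), h x * ∫⁻ y in Set.Ioi x, k y := step1
    _ = ∫⁻ y, ∫⁻ x in Set.Ioi (0 : ℝ), G (x, y) := swap
    _ ≤ ∫⁻ y, ENNReal.ofReal (ψ y ^ 2) * ENNReal.ofReal (1 / ρ ^ 2) := lintegral_mono step3
    _ = (∫⁻ y, ENNReal.ofReal (ψ y ^ 2)) * ENNReal.ofReal (1 / ρ ^ 2) :=
        lintegral_mul_const _ (by fun_prop)
    _ ≤ 1 * ENNReal.ofReal (1 / ρ ^ 2) := mul_le_mul_left hψ2 _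
    _ = ENNReal.ofReal (1 / ρ ^ 2) := one_mul _
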